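/- Let n ≥ 3 be an integer. The independence number of the permutability graph of non-normal subgroups Γ_N(D_n) of the dihedral group D_n equals n if n is odd, and equals n/2 if n is even. -/

import Mathlib

open scoped Pointwise

/-- The permutability graph of non-normal subgroups `Γ_N(G)`: vertices are the
non-normal (hence proper) subgroups of `G`, and two distinct vertices are adjacent
iff the corresponding subgroups permute, i.e. `HK = KH` as subsets of `G`. -/
def permGraphN (G : Type*) [Group G] :
    SimpleGraph {H : Subgroup G // ¬ H.Normal} where
  Adj H K := H ≠ K ∧ (H.1 : Set G) * (K.1 : Set G) = (K.1 : Set G) * (H.1 : Set G)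
  symm := ⟨fun _ _ ⟨hne, h⟩ => ⟨hne.symm, h.symm⟩⟩
  loopless := ⟨fun _ ⟨hne, _⟩ => hne rfl⟩

/-- The permutability graph of subgroups `Γ(G)`: vertices are the proper nontrivial
subgroups of `G`, and two distinct vertices are adjacent iff the corresponding
subgroups permute, i.e. `HK = KH` as subsets of `G`. -/
def permGraph (G : Type*) [Group G] :
    SimpleGraph {H : Subgroup G // H ≠ ⊥ ∧ H ≠ ⊤} where
  Adj H K := H ≠ K ∧ (H.1 : Set G) * (K.1 : Set G) = (K.1 : Set G) * (H.1 : Set G)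
  symm := ⟨fun _ _ ⟨hne, h⟩ => ⟨hne.symm, h.symm⟩⟩
  loopless := ⟨fun _ ⟨hne, _⟩ => hne rfl⟩

/-- A set of vertices is independent if no two of its members are adjacent. -/
def IsIndepSet {V : Type*} (G : SimpleGraph V) (s : Set V) : Prop :=
  s.Pairwise fun u v => ¬ G.Adj u v

/-- The independence number of a graph: the largest cardinality of an
independent set of vertices. -/
noncomputable def indepNum {V : Type*} (G : SimpleGraph V) : ℕ :=
  sSup {k | ∃ s : Set V, IsIndepSet G s ∧ s.ncard = k}

namespace DihedralAux

open DihedralGroup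

variable {n : ℕ}

lemma inv_r (i : ZMod n) : (r i)⁻¹ = r (-i) := rfl

lemma inv_sr (i : ZMod n) : (sr i)⁻¹ = sr i := rfl

/-- Membership in the subgroup generated by a reflection. -/
lemma mem_zpowers_sr_iff {j : ZMod n} {x : DihedralGroup n} :
    x ∈ Subgroup.zpowers (sr j) ↔ x = 1 ∨ x = sr j := by
  constructor
  · rintro ⟨k, rfl⟩
    have h2 : (sr j : DihedralGroup n) ^ (2 : ℤ) = 1 := by
      rw [zpow_two, sr_mul_self]
    rcases Int.even_or_odd k with ⟨m, rfl⟩ | ⟨m, rfl⟩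
    · left
      show (sr j : DihedralGroup n) ^ (m + m) = 1
      rw [show m + m = 2 * m by ring, zpow_mul, h2, one_zpow]
    · right
      show (sr j : DihedralGroup n) ^ (2 * m + 1) = sr j
      rw [zpow_add, zpow_mul, h2, one_zpow, zpow_one, one_mul]
  · rintro (rfl | rfl)
    · exact one_mem _
    · exact Subgroup.mem_zpowers _

/-- Any subgroup consisting only of rotations is normal;
hence any non-normal subgroup contains a reflection. -/
lemma exists_sr_mem (H : Subgroup (DihedralGroup n)) (h : ¬ H.Normal) :
    ∃ j : ZMod n, sr j ∈ H := by
  by_contra hc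
  push_neg at hc
  apply h
  constructor
  rintro (a | a) hx (b | b)
  · have : r b * r a * (r b)⁻¹ = r a := by
      rw [inv_r, r_mul_r, r_mul_r]
      ring_nf
    rwa [this]
  · have : sr b * r a * (sr b)⁻¹ = r (-a) := by
      rw [inv_sr, sr_mul_r, sr_mul_sr]
      ring_nf
    rw [this, ← inv_r]
    exact inv_mem hx
  · exact absurd hx (hc a)
  · exact absurd hx (hc a)

/-- Key lemma: if `H` contains `sr p` and `K` contains `sr q` with `2(p-q) = 0`,
then `K H ⊆ H K` as sets. -/
lemma prod_subset (H K : Subgroup (DihedralGroup n)) (p q : ZMod n)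
    (hp : sr p ∈ H) (hq : sr q ∈ K) (h2 : 2 * (p - q) = 0) :
    (K : Set (DihedralGroup n)) * (H : Set (DihedralGroup n)) ⊆
      (H : Set (DihedralGroup n)) * (K : Set (DihedralGroup n)) := by
  intro x hx
  rw [Set.mem_mul] at hx
  obtain ⟨k, hk, h, hh, rfl⟩ := hx
  rw [Set.mem_mul]
  rw [SetLike.mem_coe] at hh hk
  obtain (a | a) := h <;> obtain (b | b) := k
  · -- both rotations
    exact ⟨r a, hh, r b, hk, by rw [r_mul_r, r_mul_r, add_comm]⟩
  · -- h = r a, k = sr b : sr b * r a = (r a)⁻¹ * sr b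
    refine ⟨(r a)⁻¹, inv_mem hh, sr b, hk, ?_⟩
    rw [inv_r, r_mul_sr, sr_mul_r]
    ring_nf
  · -- h = sr a, k = r b : r b * sr a = sr a * (r b)⁻¹
    refine ⟨sr a, hh, (r b)⁻¹, inv_mem hk, ?_⟩
    rw [inv_r, sr_mul_r, r_mul_sr]
    ring_nf
  · -- both reflections
    refine ⟨sr p * sr a * sr p, mul_mem (mul_mem hp hh) hp,
      sr q * sr b * sr q, mul_mem (mul_mem hq hk) hq, ?_⟩
    rw [sr_mul_sr, sr_mul_sr, r_mul_sr, r_mul_sr, sr_mul_sr, sr_mul_sr]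
    congr 1
    linear_combination -h2

/-- If `H` contains `sr p` and `K` contains `sr q` with `2(p-q) = 0`, then `H` and `K`
permute. -/
lemma prod_eq (H K : Subgroup (DihedralGroup n)) (p q : ZMod n)
    (hp : sr p ∈ H) (hq : sr q ∈ K) (h2 : 2 * (p - q) = 0) :
    (H : Set (DihedralGroup n)) * (K : Set (DihedralGroup n)) =
      (K : Set (DihedralGroup n)) * (H : Set (DihedralGroup n)) := by
  have h2' : 2 * (q - p) = 0 := by linear_combination -h2
  exact subset_antisymm (prod_subset K H q p hq hp h2') (prod_subset H K p q hp hq h2)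

/-- `⟨sr j⟩` is not normal for `n ≥ 3`. -/
lemma not_normal (hn : 3 ≤ n) (j : ZMod n) : ¬ (Subgroup.zpowers (sr j)).Normal := by
  intro hN
  have h1 : sr j ∈ Subgroup.zpowers (sr j) := Subgroup.mem_zpowers _
  have h2 := hN.conj_mem _ h1 (r 1)
  have hconj : r 1 * sr j * (r 1)⁻¹ = sr (j - 2) := by
    rw [inv_r, r_mul_sr, sr_mul_r]
    ring_nf
  rw [hconj, mem_zpowers_sr_iff] at h2
  rcases h2 with h2 | h2
  · rw [one_def] at h2
    exact absurd h2 (fun h => by cases h)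
  · have hj : (2 : ZMod n) = 0 := by
      have := sr.inj h2
      linear_combination -this
    have : ((2 : ℕ) : ZMod n) = 0 := by exact_mod_cast hj
    rw [ZMod.natCast_eq_zero_iff] at this
    have := Nat.le_of_dvd (by norm_num) this
    omega

/-- Distinct reflection subgroups with `2(j-k) ≠ 0` do not permute. -/
lemma prod_ne {j k : ZMod n} (h : 2 * (j - k) ≠ 0) :
    ((Subgroup.zpowers (sr j) : Subgroup (DihedralGroup n)) : Set (DihedralGroup n)) *
        ((Subgroup.zpowers (sr k) : Subgroup (DihedralGroup n)) : Set (DihedralGroup n)) ≠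
      ((Subgroup.zpowers (sr k) : Subgroup (DihedralGroup n)) : Set (DihedralGroup n)) *
        ((Subgroup.zpowers (sr j) : Subgroup (DihedralGroup n)) : Set (DihedralGroup n)) := by
  intro he
  have hmem : sr k * sr j ∈
      ((Subgroup.zpowers (sr k) : Subgroup (DihedralGroup n)) : Set (DihedralGroup n)) *
        ((Subgroup.zpowers (sr j) : Subgroup (DihedralGroup n)) : Set (DihedralGroup n)) :=
    Set.mul_mem_mul (Subgroup.mem_zpowers _) (Subgroup.mem_zpowers _)
  rw [← he, Set.mem_mul] at hmem
  obtain ⟨a, ha, b, hb, hab⟩ := hmem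
  rw [SetLike.mem_coe, mem_zpowers_sr_iff] at ha hb
  rw [sr_mul_sr] at hab
  rcases ha with rfl | rfl <;> rcases hb with rfl | rfl
  · rw [one_mul, one_def] at hab
    have := r.inj hab
    exact h (by linear_combination -2 * this)
  · rw [one_mul] at hab
    exact absurd hab (by simp)
  · rw [mul_one] at hab
    exact absurd hab (by simp)
  · rw [sr_mul_sr] at hab
    have := r.inj hab
    exact h (by linear_combination -this)

end DihedralAux

open DihedralGroup DihedralAux in
/-- the independence number of `Γ_N(D_n)` is `n` for odd `n` and
`n/2` for even `n`. -/
theorem stmt_1 (n : ℕ) (hn : 3 ≤ n) :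
    indepNum (permGraphN (DihedralGroup n)) = if Odd n then n else n / 2 := by
  haveI : NeZero n := ⟨by omega⟩
  have hcard : Nat.card (ZMod n) = n := by
    rw [Nat.card_eq_fintype_card, ZMod.card]
  apply IsGreatest.csSup_eq
  constructor
  · -- lower bound: an independent set of the right size
    by_cases ho : Odd n
    · rw [if_pos ho]
      -- the n reflection subgroups
      set f : ZMod n → {H : Subgroup (DihedralGroup n) // ¬ H.Normal} :=
        fun j => ⟨Subgroup.zpowers (sr j), not_normal hn j⟩ with hf
      have hfi : Function.Injective f := by
        intro j k hjk
        have : sr j ∈ Subgroup.zpowers (sr k) := by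
          rw [← show (f k).1 = Subgroup.zpowers (sr k) from rfl, ← hjk]
          exact Subgroup.mem_zpowers _
        rw [mem_zpowers_sr_iff] at this
        rcases this with h1 | h1
        · rw [one_def] at h1; exact absurd h1 (fun h => by cases h)
        · exact sr.inj h1
      have hne2 : ∀ {j k : ZMod n}, j ≠ k → 2 * (j - k) ≠ 0 := by
        intro j k hjk h0
        have hu : IsUnit (2 : ZMod n) := by
          have := (ZMod.isUnit_iff_coprime 2 n).mpr (Odd.coprime_two_left ho)
          simpa using this
        rw [hu.mul_right_eq_zero, sub_eq_zero] at h0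
        exact hjk h0
      refine ⟨Set.range f, ?_, ?_⟩
      · rintro u ⟨j, rfl⟩ v ⟨k, rfl⟩ huv hadj
        have hjk : j ≠ k := fun h => huv (by rw [h])
        exact prod_ne (hne2 hjk) (hadj : _ ≠ _ ∧ _).2
      · rw [← Set.image_univ, Set.ncard_image_of_injective _ hfi, Set.ncard_univ, hcard]
    · rw [if_neg ho]
      have he : 2 ∣ n := (Nat.not_odd_iff_even.mp ho).two_dvd
      have h2n : 2 * (n / 2) = n := Nat.mul_div_cancel' he
      set f : Fin (n / 2) → {H : Subgroup (DihedralGroup n) // ¬ H.Normal} :=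
        fun i => ⟨Subgroup.zpowers (sr ((i : ℕ) : ZMod n)), not_normal hn _⟩ with hf
      have hcast : ∀ i : Fin (n / 2), (((i : ℕ) : ZMod n)).val = (i : ℕ) := by
        intro i
        exact ZMod.val_cast_of_lt (lt_of_lt_of_le i.2 (Nat.div_le_self n 2))
      have hne2 : ∀ {i i' : Fin (n / 2)}, i ≠ i' →
          2 * (((i : ℕ) : ZMod n) - ((i' : ℕ) : ZMod n)) ≠ 0 := by
        intro i i' hii h0
        apply hii
        have h0' : ((2 * (i : ℕ) : ℕ) : ZMod n) = ((2 * (i' : ℕ) : ℕ) : ZMod n) := by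
          push_cast
          linear_combination h0
        have hv1 : (2 * (i : ℕ)) < n := by
          have := i.2; omega
        have hv2 : (2 * (i' : ℕ)) < n := by
          have := i'.2; omega
        have := congrArg ZMod.val h0'
        rw [ZMod.val_cast_of_lt hv1, ZMod.val_cast_of_lt hv2] at this
        exact Fin.ext (by omega)
      have hfi : Function.Injective f := by
        intro i i' hii
        by_contra hne
        have : sr ((i : ℕ) : ZMod n) ∈ Subgroup.zpowers (sr ((i' : ℕ) : ZMod n)) := by
          rw [← show (f i').1 = Subgroup.zpowers (sr ((i' : ℕ) : ZMod n)) from rfl, ← hii]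
          exact Subgroup.mem_zpowers _
        rw [mem_zpowers_sr_iff] at this
        rcases this with h1 | h1
        · rw [one_def] at h1; exact absurd h1 (fun h => by cases h)
        · have := sr.inj h1
          exact hne2 hne (by rw [this, sub_self, mul_zero])
      refine ⟨Set.range f, ?_, ?_⟩
      · rintro u ⟨i, rfl⟩ v ⟨i', rfl⟩ huv hadj
        have hii : i ≠ i' := fun h => huv (by rw [h])
        exact prod_ne (hne2 hii) (hadj : _ ≠ _ ∧ _).2
      · rw [← Set.image_univ, Set.ncard_image_of_injective _ hfi, Set.ncard_univ,
          Nat.card_eq_fintype_card, Fintype.card_fin]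
  · -- upper bound
    rintro m ⟨s, hs, rfl⟩
    -- choose a reflection in each non-normal subgroup
    have hrefl : ∀ H : {H : Subgroup (DihedralGroup n) // ¬ H.Normal},
        ∃ j : ZMod n, sr j ∈ H.1 := fun H => exists_sr_mem H.1 H.2
    classical
    set j : {H : Subgroup (DihedralGroup n) // ¬ H.Normal} → ZMod n :=
      fun H => (hrefl H).choose with hj
    have hjmem : ∀ H, sr (j H) ∈ H.1 := fun H => (hrefl H).choose_spec
    -- if 2 * j H = 2 * j K then H and K permute
    have hkey : ∀ H ∈ s, ∀ K ∈ s, 2 * j H = 2 * j K → H = K := by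
      intro H hH K hK hjk
      by_contra hne
      refine hs hH hK hne (⟨hne, ?_⟩ : _ ≠ _ ∧ _)
      exact prod_eq H.1 K.1 (j H) (j K) (hjmem H) (hjmem K) (by linear_combination hjk)
    have hinj : Set.InjOn (fun H => 2 * j H) s := fun H hH K hK h => hkey H hH K hK h
    have hcount : s.ncard = ((fun H => 2 * j H) '' s).ncard :=
      (Set.ncard_image_of_injOn hinj).symm
    by_cases ho : Odd n
    · rw [if_pos ho, hcount]
      calc ((fun H => 2 * j H) '' s).ncard ≤ (Set.univ : Set (ZMod n)).ncard :=
            Set.ncard_le_ncard (Set.subset_univ _) Set.finite_univ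
        _ = n := by rw [Set.ncard_univ, hcard]
    · rw [if_neg ho, hcount]
      have he : 2 ∣ n := (Nat.not_odd_iff_even.mp ho).two_dvd
      -- every element of the image has even val
      have hev : ∀ x : ZMod n, 2 ∣ (2 * x).val := by
        intro x
        have : (2 * x : ZMod n) = ((2 * x.val : ℕ) : ZMod n) := by
          push_cast [ZMod.natCast_zmod_val]
          ring
        rw [this, ZMod.val_natCast]
        exact (Nat.dvd_mod_iff he).mpr ⟨x.val, rfl⟩
      -- map to ℕ by val / 2
      have hinj2 : Set.InjOn (fun y : ZMod n => y.val / 2) ((fun H => 2 * j H) '' s) := by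
        rintro y ⟨H, hH, rfl⟩ y' ⟨K, hK, rfl⟩ hyy
        have h1 := hev (j H)
        have h2 := hev (j K)
        have : (2 * j H).val = (2 * j K).val := by
          simp only at hyy
          omega
        exact ZMod.val_injective n this
      calc ((fun H => 2 * j H) '' s).ncard
          = ((fun y : ZMod n => y.val / 2) '' ((fun H => 2 * j H) '' s)).ncard :=
            (Set.ncard_image_of_injOn hinj2).symm
        _ ≤ ((Finset.range (n / 2) : Finset ℕ) : Set ℕ).ncard := by
            apply Set.ncard_le_ncard _ (Finset.range (n / 2)).finite_toSet
            rintro m ⟨y, ⟨H, hH, rfl⟩, rfl⟩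
            simp only [Finset.coe_range, Set.mem_Iio]
            have h1 := hev (j H)
            have h2 : (2 * j H).val < n := ZMod.val_lt _
            omega
        _ = n / 2 := by rw [Set.ncard_coe_finset, Finset.card_range]
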